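/- For a decomposable score and any node set V with |V| ≥ 1, the best score over all DAGs on V satisfies the recursion: bestScore(V) = max over s ∈ V of [bestScore(V \ {s}) + max over g ⊆ V \ {s} of localscore(s, g)]. -/

import Mathlib

/-- `G` is a DAG on the node set `V`: each node's parents lie in `V` (excluding itself),
and there is no directed cycle. -/
def DAGon {α : Type*} [DecidableEq α] (V : Finset α) (G : α → Finset α) : Prop :=
  (∀ v ∈ V, G v ⊆ V.erase v) ∧ (∀ v ∉ V, G v = ∅) ∧
    ∀ v, ¬ Relation.TransGen (fun u w : α => u ∈ G w) v v

/-- The best (supremum) score over all DAGs on `V` with decomposable score. -/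
noncomputable def bestScore {α : Type*} [DecidableEq α]
    (localscore : α → Finset α → ℝ) (V : Finset α) : ℝ :=
  sSup {x : ℝ | ∃ G : α → Finset α, DAGon V G ∧ x = ∑ v ∈ V, localscore v (G v)}

lemma DAGon.empty_graph {α : Type*} [DecidableEq α] (V : Finset α) :
    DAGon V (fun _ => (∅ : Finset α)) := by
  refine ⟨fun v _ => by simp, fun v _ => rfl, fun v h => ?_⟩
  cases h with
  | single h' => exact absurd h' (Finset.notMem_empty _)
  | tail _ h' => exact absurd h' (Finset.notMem_empty _)

lemma scoreSet_nonempty {α : Type*} [DecidableEq α] (localscore : α → Finset α → ℝ)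
    (V : Finset α) :
    {x : ℝ | ∃ G : α → Finset α, DAGon V G ∧ x = ∑ v ∈ V, localscore v (G v)}.Nonempty :=
  ⟨∑ v ∈ V, localscore v ∅, fun _ => ∅, DAGon.empty_graph V, rfl⟩

lemma scoreSet_bddAbove {α : Type*} [DecidableEq α] (localscore : α → Finset α → ℝ)
    (V : Finset α) :
    BddAbove {x : ℝ | ∃ G : α → Finset α, DAGon V G ∧ x = ∑ v ∈ V, localscore v (G v)} := by
  refine ⟨∑ v ∈ V, (V.erase v).powerset.sup' ⟨∅, Finset.empty_mem_powerset _⟩ (localscore v), ?_⟩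
  rintro x ⟨G, hG, rfl⟩
  refine Finset.sum_le_sum fun v hv => ?_
  exact Finset.le_sup' (localscore v) (Finset.mem_powerset.2 (hG.1 v hv))

lemma notStart {α : Type*} {r : α → α → Prop} {s : α} (hs : ∀ w, ¬ r s w) :
    ∀ {a b : α}, Relation.TransGen r a b → a ≠ s := by
  intro a b h
  induction h with
  | single h' => intro he; exact hs _ (he ▸ h')
  | tail _ _ ih => exact ih

lemma avoidEnd {α : Type*} {r : α → α → Prop} {s : α} (hs : ∀ w, ¬ r s w) :
    ∀ {a b : α}, Relation.TransGen r a b → b ≠ s →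
      Relation.TransGen (fun u w => r u w ∧ w ≠ s) a b := by
  intro a b h
  induction h with
  | single h' => intro hb; exact .single ⟨h', hb⟩
  | tail h1 h2 ih =>
    intro hc
    exact (ih (fun he => hs _ (he ▸ h2))).tail ⟨h2, hc⟩

lemma exists_sink {α : Type*} [DecidableEq α] (V : Finset α) (hV : V.Nonempty)
    (G : α → Finset α) (hG : DAGon V G) : ∃ s ∈ V, ∀ v, s ∉ G v := by
  classical
  by_contra hcon
  push_neg at hcon
  -- every node of V is a parent of someone
  have hstep : ∀ s ∈ V, ∃ v, s ∈ G v := fun s hs => hcon s hs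
  set f : α → α := fun s => if h : ∃ v, s ∈ G v then h.choose else s with hf
  have hfprop : ∀ s ∈ V, s ∈ G (f s) ∧ f s ∈ V := by
    intro s hs
    have h := hstep s hs
    have h1 : s ∈ G (f s) := by
      simp only [hf, dif_pos h]
      exact h.choose_spec
    refine ⟨h1, ?_⟩
    by_contra hne
    rw [hG.2.1 _ hne] at h1
    exact absurd h1 (Finset.notMem_empty _)
  set g : ℕ → α := fun n => f^[n] hV.choose with hg
  have hgV : ∀ n, g n ∈ V := by
    intro n
    induction n with
    | zero => exact hV.choose_spec
    | succ k ih =>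
      have : g (k + 1) = f (g k) := by
        simp [hg, Function.iterate_succ_apply']
      rw [this]
      exact (hfprop _ ih).2
  have hedge : ∀ n, g n ∈ G (g (n + 1)) := by
    intro n
    have : g (n + 1) = f (g n) := by simp [hg, Function.iterate_succ_apply']
    rw [this]
    exact (hfprop _ (hgV n)).1
  have chain : ∀ m n : ℕ, m < n →
      Relation.TransGen (fun u w : α => u ∈ G w) (g m) (g n) := by
    intro m n h
    induction n with
    | zero => omega
    | succ k ih =>
      rcases Nat.lt_succ_iff_lt_or_eq.mp h with h' | h'
      · exact (ih h').tail (hedge k)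
      · subst h'; exact .single (hedge m)
  -- pigeonhole
  obtain ⟨a, ha, b, hb, hab, heq⟩ :=
    Finset.exists_ne_map_eq_of_card_lt_of_maps_to
      (s := Finset.range (V.card + 1)) (t := V)
      (by simp) (fun n _ => hgV n)
  rcases lt_or_gt_of_ne hab with h | h
  · exact hG.2.2 (g a) (heq ▸ chain a b h)
  · exact hG.2.2 (g b) (heq ▸ chain b a h)

theorem stmt_6 {α : Type*} [DecidableEq α] (localscore : α → Finset α → ℝ)
    (V : Finset α) (hV : V.Nonempty) :
    bestScore localscore V =
      V.sup' hV (fun s =>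
        bestScore localscore (V.erase s) +
          (V.erase s).powerset.sup' ⟨∅, Finset.empty_mem_powerset _⟩ (localscore s)) := by
  classical
  apply le_antisymm
  · -- bestScore V ≤ sup'
    refine csSup_le (scoreSet_nonempty localscore V) ?_
    rintro x ⟨G, hG, rfl⟩
    obtain ⟨s, hsV, hsink⟩ := exists_sink V hV G hG
    refine le_trans ?_ (Finset.le_sup' _ hsV)
    rw [← Finset.sum_erase_add V _ hsV]
    have h1 : ∑ v ∈ V.erase s, localscore v (G v) ≤ bestScore localscore (V.erase s) := by
      refine le_csSup (scoreSet_bddAbove localscore (V.erase s)) ?_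
      refine ⟨Function.update G s ∅, ⟨?_, ?_, ?_⟩, ?_⟩
      · intro v hv
        rw [Function.update_of_ne (Finset.ne_of_mem_erase hv)]
        rw [Finset.erase_right_comm]
        exact Finset.subset_erase.2 ⟨hG.1 v (Finset.mem_of_mem_erase hv), hsink v⟩
      · intro v hv
        by_cases hvs : v = s
        · subst hvs; simp
        · rw [Function.update_of_ne hvs]
          exact hG.2.1 v (fun hvV => hv (Finset.mem_erase.2 ⟨hvs, hvV⟩))
      · intro v hcyc
        refine hG.2.2 v (Relation.TransGen.mono ?_ _ _ hcyc)
        intro u w hu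
        by_cases hws : w = s
        · subst hws; simp at hu
        · rwa [Function.update_of_ne hws] at hu
      · refine Finset.sum_congr rfl fun v hv => ?_
        rw [Function.update_of_ne (Finset.ne_of_mem_erase hv)]
    have h2 : localscore s (G s) ≤
        (V.erase s).powerset.sup' ⟨∅, Finset.empty_mem_powerset _⟩ (localscore s) :=
      Finset.le_sup' (localscore s) (Finset.mem_powerset.2 (hG.1 s hsV))
    exact add_le_add h1 h2
  · -- sup' ≤ bestScore V
    refine Finset.sup'_le _ _ ?_
    intro s hsV
    obtain ⟨g₀, hg₀mem, hg₀⟩ :=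
      Finset.exists_mem_eq_sup' (⟨∅, Finset.empty_mem_powerset _⟩ :
        ((V.erase s).powerset).Nonempty) (localscore s)
    rw [hg₀]
    have hg₀sub : g₀ ⊆ V.erase s := Finset.mem_powerset.1 hg₀mem
    have key : ∀ x ∈ {x : ℝ | ∃ G : α → Finset α, DAGon (V.erase s) G ∧
        x = ∑ v ∈ V.erase s, localscore v (G v)},
        x ≤ bestScore localscore V - localscore s g₀ := by
      rintro x ⟨G', hG', rfl⟩
      set G : α → Finset α := Function.update G' s g₀ with hGdef
      have hnp : ∀ w, ¬ s ∈ G w := by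
        intro w hw
        by_cases hws : w = s
        · rw [hws, hGdef, Function.update_self] at hw
          exact absurd (hg₀sub hw) (Finset.notMem_erase s V)
        · rw [hGdef, Function.update_of_ne hws] at hw
          by_cases hwV : w ∈ V.erase s
          · have := hG'.1 w hwV hw
            exact (Finset.mem_erase.1 (Finset.mem_of_mem_erase this)).1 rfl
          · rw [hG'.2.1 w hwV] at hw
            exact absurd hw (Finset.notMem_empty _)
      have hDAG : DAGon V G := by
        refine ⟨?_, ?_, ?_⟩
        · intro v hv
          by_cases hvs : v = s
          · subst hvs
            rw [hGdef, Function.update_self]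
            exact hg₀sub
          · rw [hGdef, Function.update_of_ne hvs]
            have hv' : v ∈ V.erase s := Finset.mem_erase.2 ⟨hvs, hv⟩
            exact (hG'.1 v hv').trans
              ((Finset.erase_right_comm (a := s) (b := v)) ▸
                Finset.erase_subset s (V.erase v))
        · intro v hv
          have hvs : v ≠ s := fun h => hv (h ▸ hsV)
          rw [hGdef, Function.update_of_ne hvs]
          exact hG'.2.1 v (fun h => hv (Finset.mem_of_mem_erase h))
        · intro v hcyc
          have hvs : v ≠ s := notStart hnp hcyc
          have h2 := avoidEnd hnp hcyc hvs
          refine hG'.2.2 v (Relation.TransGen.mono ?_ _ _ h2)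
          rintro u w ⟨hu, hws⟩
          rwa [hGdef, Function.update_of_ne hws] at hu
      have hmem : ∑ v ∈ V, localscore v (G v) ∈
          {x : ℝ | ∃ G : α → Finset α, DAGon V G ∧ x = ∑ v ∈ V, localscore v (G v)} :=
        ⟨G, hDAG, rfl⟩
      have hle : ∑ v ∈ V, localscore v (G v) ≤ bestScore localscore V :=
        le_csSup (scoreSet_bddAbove localscore V) hmem
      have hsum : ∑ v ∈ V, localscore v (G v)
          = (∑ v ∈ V.erase s, localscore v (G' v)) + localscore s g₀ := by
        rw [← Finset.sum_erase_add V _ hsV]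
        congr 1
        · refine Finset.sum_congr rfl fun v hv => ?_
          rw [hGdef, Function.update_of_ne (Finset.ne_of_mem_erase hv)]
        · rw [hGdef, Function.update_self]
      linarith [hsum ▸ hle]
    have := csSup_le (scoreSet_nonempty localscore (V.erase s)) key
    rw [bestScore]
    linarith
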